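/- arXiv:2401.16709 — 3 statements merged into one kernel-verified Lean document; each statement's English description precedes it below -/
import Mathlib

section
/- Suppose candidates are produced in an order such that the partial soft weights Γ(e_R^{(j)}) are non-decreasing in j, and let e_opt^{(j)} be a TEP minimizing Γ over the first j full candidates e^{(ℓ)} = (e_L^{(ℓ)}, e_R^{(ℓ)}). If for some index j we have Γ(e_opt^{(j)}) ≤ Γ(e_R^{(j)}), then for all ℓ (both ℓ ≤ j and ℓ > j) we have Γ(e_opt^{(j)}) ≤ Γ(e^{(ℓ)}); i.e., e_opt^{(j)} attains the minimum soft weight over the entire (potentially longer) candidate list. -/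
/-- Trivial stopping criterion: if the up-to-date optimum over the first `j`
candidates is no heavier than the `j`-th right-part soft weight, then it is a
global minimum over the whole candidate list. -/
theorem trivial_stopping_criterion_ML (j : ℕ) (hj : 1 ≤ j)
    (Γfull ΓL ΓR : ℕ → ℝ) (Γopt : ℝ)
    (hdecomp : ∀ ℓ, Γfull ℓ = ΓL ℓ + ΓR ℓ)
    (hLnonneg : ∀ ℓ, 0 ≤ ΓL ℓ)
    (hRnonneg : ∀ ℓ, 0 ≤ ΓR ℓ)
    (hmono : Monotone ΓR)
    (hopt_lb : ∀ ℓ, 1 ≤ ℓ → ℓ ≤ j → Γopt ≤ Γfull ℓ)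
    (hopt_mem : ∃ ℓ, 1 ≤ ℓ ∧ ℓ ≤ j ∧ Γopt = Γfull ℓ)
    (hstop : Γopt ≤ ΓR j) :
    ∀ ℓ, 1 ≤ ℓ → Γopt ≤ Γfull ℓ := by
  intro ℓ hℓ
  by_cases h : ℓ ≤ j
  · exact hopt_lb ℓ hℓ h
  · have hjℓ : j ≤ ℓ := le_of_not_ge h
    calc Γopt ≤ ΓR j := hstop
      _ ≤ ΓR ℓ := hmono hjℓ
      _ ≤ ΓL ℓ + ΓR ℓ := le_add_of_nonneg_left (hLnonneg ℓ)
      _ = Γfull ℓ := (hdecomp ℓ).symm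
end

section
/- With the setup of the approximate-ideal stopping criterion: assume the sent TEP e appears at position j* (the first ML position, j* > 1), the threshold satisfies τ ≤ Γ(e_L) + ΔΓ where ΔΓ = Γ(e_opt^{(j*-1)}) − Γ(e_R^{(j*-1)}) − Γ(e_L^{(j*)}), the right soft weights are non-decreasing, and Γ(e) = Γ(e^{(j*)}) with Γ(e_R) ≥ Γ(e_R^{(j*)}). Then Γ(e_opt^{(j*-1)}) − τ − Γ(e_R^{(j*-1)}) ≥ 0; i.e., the stopping criterion Γ(e_opt^{(j)}) < τ + Γ(e_R^{(j)}) cannot trigger at any index j ≤ j*−1. -/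
/-- Approximate-ideal stopping criterion: under the stated threshold bound, the
criterion cannot trigger before the first ML candidate is generated. -/
theorem approximate_ideal_no_premature_stop (jstar : ℕ) (hj : 1 < jstar)
    (Γfull ΓL ΓR : ℕ → ℝ) (Γopt : ℕ → ℝ) (ΓLe ΓRe τ : ℝ)
    (hdecomp : ∀ ℓ, Γfull ℓ = ΓL ℓ + ΓR ℓ)
    (hmono : Monotone ΓR)
    (hopt_lb : ∀ j ℓ, 1 ≤ ℓ → ℓ ≤ j → Γopt j ≤ Γfull ℓ)
    (hopt_mem : ∀ j, 1 ≤ j → ∃ ℓ, 1 ≤ ℓ ∧ ℓ ≤ j ∧ Γopt j = Γfull ℓ)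
    (hsent : ΓLe + ΓRe = Γfull jstar)
    (hRe : ΓR jstar ≤ ΓRe)
    (hτ : τ ≤ ΓLe + (Γopt (jstar - 1) - ΓR (jstar - 1) - ΓL jstar)) :
    0 ≤ Γopt (jstar - 1) - τ - ΓR (jstar - 1) ∧
      ∀ j, 1 ≤ j → j ≤ jstar - 1 → ¬ (Γopt j < τ + ΓR j) := by
  have hLe : ΓLe ≤ ΓL jstar := by
    have := hdecomp jstar; linarith
  have key : τ + ΓR (jstar - 1) ≤ Γopt (jstar - 1) := by linarith
  refine ⟨by linarith, ?_⟩
  intro j h1 h2 hlt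
  obtain ⟨ℓ, hℓ1, hℓ2, hval⟩ := hopt_mem j h1
  have h3 : Γopt (jstar - 1) ≤ Γfull ℓ := hopt_lb _ _ hℓ1 (hℓ2.trans h2)
  have h4 : ΓR j ≤ ΓR (jstar - 1) := hmono h2
  linarith [hval ▸ h3]
end

section
/- If e ⋠ e' (e does not precede e'), then there exists a non-decreasing nonnegative vector |r| ∈ ℝ^N with Γ(e) > Γ(e'). Concretely, since e ⋠ e' implies there is a positive integer j with |supp_{≥j}(e)| > |supp_{≥j}(e')|, the 0/1-valued vector r_i = 0 for i < j and r_i = 1 for i ≥ j works. -/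
/-- The precedence relation on `F₂^N`. -/
def Prec {N : ℕ} (e e' : Fin N → ZMod 2) : Prop :=
  ∃ π : {i : Fin N // e i ≠ 0} → {i : Fin N // e' i ≠ 0},
    Function.Injective π ∧ ∀ i, (i.1 : Fin N) ≤ (π i).1

open Finset in
/-- Hall's condition in terms of suffix support counts implies precedence. -/
lemma prec_of_counts {N : ℕ} (e e' : Fin N → ZMod 2)
    (hc : ∀ j : Fin N,
      (univ.filter fun i => e i ≠ 0 ∧ j ≤ i).card ≤
      (univ.filter fun i => e' i ≠ 0 ∧ j ≤ i).card) : Prec e e' := by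
  classical
  set t : {i : Fin N // e i ≠ 0} → Finset (Fin N) :=
    fun i => univ.filter fun i' => e' i' ≠ 0 ∧ i.1 ≤ i' with ht
  have hall : ∀ s : Finset {i : Fin N // e i ≠ 0}, s.card ≤ (s.biUnion t).card := by
    intro s
    rcases s.eq_empty_or_nonempty with rfl | hs
    · simp
    · obtain ⟨m, hm, hmin⟩ := s.exists_min_image (fun i => i.1) hs
      have h1 : s.card ≤ (univ.filter fun i => e i ≠ 0 ∧ m.1 ≤ i).card := by
        have : s.card = (s.image (fun i => i.1)).card := by
          rw [Finset.card_image_of_injective _ Subtype.val_injective]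
        rw [this]
        apply Finset.card_le_card
        intro x hx
        simp only [Finset.mem_image] at hx
        obtain ⟨a, ha, rfl⟩ := hx
        simp only [Finset.mem_filter, Finset.mem_univ, true_and]
        exact ⟨a.2, hmin a ha⟩
      have h2 : (univ.filter fun i => e' i ≠ 0 ∧ m.1 ≤ i) ⊆ s.biUnion t := by
        intro x hx
        exact Finset.mem_biUnion.2 ⟨m, hm, hx⟩
      exact h1.trans ((hc m.1).trans (Finset.card_le_card h2))
  obtain ⟨f, hf, hfm⟩ := (Finset.all_card_le_biUnion_card_iff_exists_injective t).1 hall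
  refine ⟨fun i => ⟨f i, ?_⟩, ?_, ?_⟩
  · have := hfm i; simp only [ht, Finset.mem_filter] at this; exact this.2.1
  · intro a b hab
    exact hf (congrArg Subtype.val hab)
  · intro i
    have := hfm i; simp only [ht, Finset.mem_filter] at this; exact this.2.2

/-- If `e` does not precede `e'`, then some non-decreasing nonnegative
(indeed 0/1-valued) reliability vector makes `Γ(e) > Γ(e')`. -/
theorem not_prec_exists_soft_weight_gt (N : ℕ) (e e' : Fin N → ZMod 2)
    (h : ¬ Prec e e') :
    ∃ r : Fin N → ℝ, Monotone r ∧ (∀ i, 0 ≤ r i) ∧ (∀ i, r i = 0 ∨ r i = 1) ∧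
      ∑ i : Fin N, ((e' i).val : ℝ) * r i < ∑ i : Fin N, ((e i).val : ℝ) * r i := by
  classical
  have hj : ∃ j : Fin N,
      (Finset.univ.filter fun i => e' i ≠ 0 ∧ j ≤ i).card <
      (Finset.univ.filter fun i => e i ≠ 0 ∧ j ≤ i).card := by
    by_contra hcon
    push_neg at hcon
    exact h (prec_of_counts e e' hcon)
  obtain ⟨j, hj⟩ := hj
  refine ⟨fun i => if j ≤ i then 1 else 0, ?_, ?_, ?_, ?_⟩
  · intro a b hab
    by_cases ha : j ≤ a
    · simp [ha, ha.trans hab]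
    · by_cases hb : j ≤ b <;> simp [ha, hb]
  · intro i; positivity
  · intro i; by_cases hi : j ≤ i <;> simp [hi]
  · have key : ∀ v : Fin N → ZMod 2,
        ∑ i : Fin N, ((v i).val : ℝ) * (if j ≤ i then 1 else 0)
          = ((Finset.univ.filter fun i => v i ≠ 0 ∧ j ≤ i).card : ℝ) := by
      intro v
      rw [Finset.card_eq_sum_ones]
      push_cast
      rw [Finset.sum_filter]
      refine Finset.sum_congr rfl fun i _ => ?_
      have hlt := ZMod.val_lt (v i)
      have hz : (v i).val = 0 ↔ v i = 0 := ZMod.val_eq_zero _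
      by_cases hv : v i = 0
      · simp [hv, hz.mpr hv]
      · have h1 : (v i).val = 1 := by
          have : (v i).val ≠ 0 := fun hh => hv (hz.1 hh)
          omega
        by_cases hji : j ≤ i <;> simp [h1, hv, hji]
    rw [key e, key e']
    exact_mod_cast hj
end
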